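/- Suppose the grade m is even, m ≥ 2, and assume the expectation Gram matrix is positive semidefinite at grade m. Then for every real ε, with Q_ε := ½(id−S) + ε·J^{⋆m}, one has ‖(id−E)∘Q_ε‖² ≥ ‖(id−E)∘Q_0‖², where the inner product is taken over the words of length m; that is, among all such perturbations the unperturbed sinhlog integrator (ε = 0) minimizes the leading-order mean-square error. -/

import Mathlib

open Finsupp

/-- Words over the alphabet `A = {0,1,…,d}`. -/
abbrev Word (d : ℕ) : Type := List (Fin (d+1))

/-- The free real vector space with basis the set of all words. -/
abbrev KA (d : ℕ) : Type := Word d →₀ ℝ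

/-- Shuffle product of two words, as an element of `KA d`. -/
noncomputable def shuffleWord (d : ℕ) : Word d → Word d → KA d
  | [], v => Finsupp.single v 1
  | a :: u, [] => Finsupp.single (a :: u) 1
  | a :: u, b :: v =>
      Finsupp.mapDomain (List.cons a) (shuffleWord d u (b :: v)) +
      Finsupp.mapDomain (List.cons b) (shuffleWord d (a :: u) v)
  termination_by u v => u.length + v.length

/-- Bilinear extension of the shuffle product to `KA d`. -/
noncomputable def sh (d : ℕ) (x y : KA d) : KA d :=
  x.sum fun u cu => y.sum fun v cv => (cu * cv) • shuffleWord d u v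

/-- Admissible words: concatenations of blocks each of which is the single
letter `0` or a pair `aa` with `a ≠ 0`. -/
inductive Admissible (d : ℕ) : Word d → Prop
  | nil : Admissible d []
  | zero {w : Word d} : Admissible d w → Admissible d (0 :: w)
  | pair {w : Word d} (a : Fin (d+1)) : a ≠ 0 → Admissible d w →
      Admissible d (a :: a :: w)

/-- Number of `0` letters. -/
def zc (d : ℕ) (w : Word d) : ℕ := w.count 0

/-- Half the number of nonzero letters. -/
def dc (d : ℕ) (w : Word d) : ℕ := (w.length - w.count 0) / 2

def nc (d : ℕ) (w : Word d) : ℕ := zc d w + dc d w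

open Classical in
/-- The expectation map on words. -/
noncomputable def Ebar (d : ℕ) (t : ℝ) (w : Word d) : ℝ :=
  if Admissible d w then t ^ nc d w / (2 ^ dc d w * Nat.factorial (nc d w)) else 0

/-- Linear extension of the expectation map to `KA d`. -/
noncomputable def EbarL (d : ℕ) (t : ℝ) (x : KA d) : ℝ :=
  x.sum fun w c => c * Ebar d t w

/-- The linear endomorphism of `KA d` determined by values on basis words. -/
noncomputable def wordLift (d : ℕ) (f : Word d → KA d) : KA d →ₗ[ℝ] KA d :=
  Finsupp.lsum ℝ fun w => LinearMap.toSpanSingleton ℝ (KA d) (f w)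

/-- The identity endomorphism `id`. -/
noncomputable def idE (d : ℕ) : KA d →ₗ[ℝ] KA d := LinearMap.id

/-- The reversal endomorphism `|S|`. -/
noncomputable def revE (d : ℕ) : KA d →ₗ[ℝ] KA d :=
  wordLift d fun w => Finsupp.single w.reverse 1

/-- The antipode `S`. -/
noncomputable def Sa (d : ℕ) : KA d →ₗ[ℝ] KA d :=
  wordLift d fun w => Finsupp.single w.reverse ((-1 : ℝ) ^ w.length)

/-- The convolution unit `ν`. -/
noncomputable def nuE (d : ℕ) : KA d →ₗ[ℝ] KA d :=
  wordLift d fun w => if w = [] then Finsupp.single ([] : Word d) 1 else 0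

/-- The expectation endomorphism `E`. -/
noncomputable def EE (d : ℕ) (t : ℝ) : KA d →ₗ[ℝ] KA d :=
  wordLift d fun w => Finsupp.single ([] : Word d) (Ebar d t w)

/-- The convolution product `X ⋆ Y`. -/
noncomputable def conv (d : ℕ) (X Y : KA d →ₗ[ℝ] KA d) : KA d →ₗ[ℝ] KA d :=
  wordLift d fun w => ∑ k ∈ Finset.range (w.length + 1),
    sh d (X (Finsupp.single (w.take k) 1)) (Y (Finsupp.single (w.drop k) 1))

/-- Convolution powers, `X^{⋆0} = ν`. -/
noncomputable def convPow (d : ℕ) (X : KA d →ₗ[ℝ] KA d) : ℕ → (KA d →ₗ[ℝ] KA d)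
  | 0 => nuE d
  | k + 1 => conv d X (convPow d X k)

/-- The inner product `⟨X,Y⟩` of endomorphisms, taken over the words of
length `n`, relative to the family of vectors `Vf`. -/
noncomputable def ip (d : ℕ) (t : ℝ) {H : Type*} [NormedAddCommGroup H]
    [InnerProductSpace ℝ H] (Vf : Word d → H) (n : ℕ)
    (X Y : KA d →ₗ[ℝ] KA d) : ℝ :=
  ∑ u : Fin n → Fin (d+1), ∑ v : Fin n → Fin (d+1),
    EbarL d t (sh d (X (Finsupp.single (List.ofFn u) 1))
                    (Y (Finsupp.single (List.ofFn v) 1))) *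
      (inner ℝ (Vf (List.ofFn u)) (Vf (List.ofFn v)) : ℝ)

/-- Positive semidefiniteness of the expectation Gram matrix at grade `n`:
indexed by the words of length `n` together with the empty word. -/
def gramPSD (d n : ℕ) (t : ℝ) : Prop :=
  ∀ c : Option (Fin n → Fin (d+1)) → ℝ,
    0 ≤ ∑ x : Option (Fin n → Fin (d+1)), ∑ y : Option (Fin n → Fin (d+1)),
      c x * c y *
        EbarL d t (shuffleWord d (x.elim ([] : Word d) List.ofFn)
                                 (y.elim ([] : Word d) List.ofFn))

/-- The grade-`m` pre-remainder `Q_ε = ½(id−S) + ε·J^{⋆m}` of the perturbed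
sinhlog integrator. -/
noncomputable def Qeps (d m : ℕ) (ε : ℝ) : KA d →ₗ[ℝ] KA d :=
  (1 / 2 : ℝ) • (idE d - Sa d) + ε • convPow d (idE d - nuE d) m


-- ===== auxiliary lemmas =====

lemma shW_nil_left (d : ℕ) (v : Word d) : shuffleWord d [] v = Finsupp.single v 1 := by
  cases v <;> simp [shuffleWord]

lemma shW_nil_right (d : ℕ) (u : Word d) : shuffleWord d u [] = Finsupp.single u 1 := by
  cases u <;> simp [shuffleWord]

lemma shW_cons_cons (d : ℕ) (a b : Fin (d+1)) (u v : Word d) :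
    shuffleWord d (a :: u) (b :: v) =
      Finsupp.mapDomain (List.cons a) (shuffleWord d u (b :: v)) +
      Finsupp.mapDomain (List.cons b) (shuffleWord d (a :: u) v) := by
  rw [shuffleWord]

lemma shW_comm (d : ℕ) (u v : Word d) : shuffleWord d u v = shuffleWord d v u := by
  induction u generalizing v with
  | nil => rw [shW_nil_left, shW_nil_right]
  | cons a u ihu =>
    induction v with
    | nil => rw [shW_nil_left, shW_nil_right]
    | cons b v ihv =>
      rw [shW_cons_cons, shW_cons_cons, ihu (b :: v), ihv, add_comm]

lemma mD_cons_append (d : ℕ) (a b : Fin (d+1)) (x : KA d) :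
    Finsupp.mapDomain (List.cons a) (Finsupp.mapDomain (· ++ [b]) x) =
      Finsupp.mapDomain (· ++ [b]) (Finsupp.mapDomain (List.cons a) x) := by
  rw [← Finsupp.mapDomain_comp, ← Finsupp.mapDomain_comp]
  congr 1

lemma shW_snoc (d : ℕ) (a b : Fin (d+1)) : ∀ (u v : Word d),
    shuffleWord d (u ++ [a]) (v ++ [b]) =
      Finsupp.mapDomain (· ++ [a]) (shuffleWord d u (v ++ [b])) +
      Finsupp.mapDomain (· ++ [b]) (shuffleWord d (u ++ [a]) v) := by
  intro u
  induction u with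
  | nil =>
    intro v
    induction v with
    | nil =>
      simp only [List.nil_append, shW_nil_left, shW_nil_right, shW_cons_cons,
        Finsupp.mapDomain_single, List.cons_append]
      abel
    | cons e v' ihv =>
      simp only [List.nil_append, List.cons_append] at *
      rw [shW_cons_cons, shW_nil_left, ihv, shW_cons_cons, shW_nil_left, shW_nil_left]
      simp only [Finsupp.mapDomain_add, Finsupp.mapDomain_single, mD_cons_append,
        List.cons_append]
      abel
  | cons c u' ihu =>
    intro v
    induction v with
    | nil =>
      have ihu0 := ihu []
      simp only [List.nil_append, List.cons_append] at *
      rw [shW_cons_cons, shW_nil_right, ihu0, shW_nil_right, shW_cons_cons, shW_nil_right]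
      simp only [Finsupp.mapDomain_add, Finsupp.mapDomain_single, mD_cons_append,
        List.cons_append, shW_nil_left]
      abel
    | cons e v' ihv =>
      have ihu1 := ihu (e :: v')
      simp only [List.cons_append] at *
      rw [shW_cons_cons, ihu1, ihv, shW_cons_cons d c e u' (v' ++ [b]),
        shW_cons_cons d c e (u' ++ [a]) v']
      simp only [Finsupp.mapDomain_add, Finsupp.mapDomain_single, mD_cons_append,
        List.cons_append]
      abel

lemma mD_rev_cons (d : ℕ) (a : Fin (d+1)) (x : KA d) :
    Finsupp.mapDomain List.reverse (Finsupp.mapDomain (List.cons a) x) =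
      Finsupp.mapDomain (· ++ [a]) (Finsupp.mapDomain List.reverse x) := by
  rw [← Finsupp.mapDomain_comp, ← Finsupp.mapDomain_comp]
  congr 1
  funext l
  simp

lemma shW_rev (d : ℕ) (u v : Word d) :
    Finsupp.mapDomain List.reverse (shuffleWord d u v) =
      shuffleWord d u.reverse v.reverse := by
  induction u generalizing v with
  | nil => simp [shW_nil_left, Finsupp.mapDomain_single]
  | cons a u' ihu =>
    induction v with
    | nil => simp [shW_nil_right, Finsupp.mapDomain_single]
    | cons b v' ihv =>
      rw [shW_cons_cons, Finsupp.mapDomain_add, mD_rev_cons, mD_rev_cons,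
        ihu (b :: v'), ihv]
      simp only [List.reverse_cons]
      rw [shW_snoc]

lemma shW_len (d : ℕ) (u v : Word d) :
    ∀ w ∈ (shuffleWord d u v).support, w.length = u.length + v.length := by
  induction u generalizing v with
  | nil =>
    intro w hw
    rw [shW_nil_left] at hw
    have := Finsupp.support_single_subset hw
    simp at this
    simp [this]
  | cons a u' ihu =>
    induction v with
    | nil =>
      intro w hw
      rw [shW_nil_right] at hw
      have := Finsupp.support_single_subset hw
      simp at this
      simp [this]
    | cons b v' ihv =>
      intro w hw
      rw [shW_cons_cons] at hw
      rcases Finset.mem_union.mp (Finsupp.support_add hw) with h | h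
      · rcases Finset.mem_image.mp (Finsupp.mapDomain_support h) with ⟨w', hw', rfl⟩
        have := ihu (b :: v') w' hw'
        simp [this]; omega
      · rcases Finset.mem_image.mp (Finsupp.mapDomain_support h) with ⟨w', hw', rfl⟩
        have := ihv w' hw'
        simp at this ⊢
        omega

noncomputable def shL (d : ℕ) : KA d →ₗ[ℝ] KA d →ₗ[ℝ] KA d :=
  Finsupp.lsum ℝ fun u => LinearMap.toSpanSingleton ℝ (KA d →ₗ[ℝ] KA d)
    (Finsupp.lsum ℝ fun v => LinearMap.toSpanSingleton ℝ (KA d) (shuffleWord d u v))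

lemma sh_eq_shL (d : ℕ) (x y : KA d) : sh d x y = shL d x y := by
  rw [sh, shL, Finsupp.lsum_apply, Finsupp.sum, Finsupp.sum, LinearMap.sum_apply]
  refine Finset.sum_congr rfl fun u _ => ?_
  rw [LinearMap.toSpanSingleton_apply, LinearMap.smul_apply, Finsupp.lsum_apply,
    Finsupp.smul_sum]
  refine Finsupp.sum_congr fun v _ => ?_
  rw [LinearMap.toSpanSingleton_apply, smul_smul]

lemma shL_single_single (d : ℕ) (u v : Word d) :
    shL d (Finsupp.single u 1) (Finsupp.single v 1) = shuffleWord d u v := by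
  rw [shL, Finsupp.lsum_single, LinearMap.toSpanSingleton_apply, one_smul,
    Finsupp.lsum_single, LinearMap.toSpanSingleton_apply, one_smul]

lemma Admissible.append_zero {d : ℕ} {w : Word d} (h : Admissible d w) :
    Admissible d (w ++ [0]) := by
  induction h with
  | nil => exact .zero .nil
  | zero h ih => exact .zero ih
  | pair a ha h ih => exact .pair a ha ih

lemma Admissible.append_pair {d : ℕ} {w : Word d} (a : Fin (d+1)) (ha : a ≠ 0)
    (h : Admissible d w) : Admissible d (w ++ [a, a]) := by
  induction h with
  | nil => exact .pair a ha .nil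
  | zero h ih => exact .zero ih
  | pair b hb h ih => exact .pair b hb ih

lemma Admissible.rev {d : ℕ} {w : Word d} (h : Admissible d w) :
    Admissible d w.reverse := by
  induction h with
  | nil => exact .nil
  | zero h ih => simpa using ih.append_zero
  | pair a ha h ih => simpa using ih.append_pair a ha

lemma Ebar_rev (d : ℕ) (t : ℝ) (w : Word d) : Ebar d t w.reverse = Ebar d t w := by
  have hadm : Admissible d w.reverse ↔ Admissible d w := by
    constructor
    · intro h; simpa using h.rev
    · exact Admissible.rev
  have hz : zc d w.reverse = zc d w := by simp [zc, List.count_reverse]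
  have hd : dc d w.reverse = dc d w := by simp [dc, List.count_reverse]
  have hn : nc d w.reverse = nc d w := by simp [nc, hz, hd]
  rw [Ebar, Ebar, hn, hd]
  by_cases h : Admissible d w
  · rw [if_pos (hadm.mpr h), if_pos h]
  · rw [if_neg (fun hh => h (hadm.mp hh)), if_neg h]

lemma EbarL_single (d : ℕ) (t : ℝ) (w : Word d) (c : ℝ) :
    EbarL d t (Finsupp.single w c) = c * Ebar d t w := by
  rw [EbarL, Finsupp.sum_single_index]
  simp

noncomputable def EbarLM (d : ℕ) (t : ℝ) : KA d →ₗ[ℝ] ℝ :=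
  Finsupp.lsum ℝ fun w => LinearMap.toSpanSingleton ℝ ℝ (Ebar d t w)

lemma EbarL_eq (d : ℕ) (t : ℝ) (x : KA d) : EbarL d t x = EbarLM d t x := by
  rw [EbarL, EbarLM, Finsupp.lsum_apply]
  exact Finsupp.sum_congr fun w _ => by
    rw [LinearMap.toSpanSingleton_apply, smul_eq_mul]

lemma EbarL_mD_rev (d : ℕ) (t : ℝ) (x : KA d) :
    EbarL d t (Finsupp.mapDomain List.reverse x) = EbarL d t x := by
  rw [EbarL, Finsupp.sum_mapDomain_index (by simp) (by intros; ring)]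
  exact Finsupp.sum_congr fun w _ => by rw [Ebar_rev]

lemma Ebar_nil (d : ℕ) (t : ℝ) : Ebar d t [] = 1 := by
  rw [Ebar, if_pos Admissible.nil]
  simp [nc, zc, dc]



lemma wordLift_single (d : ℕ) (f : Word d → KA d) (w : Word d) (c : ℝ) :
    wordLift d f (Finsupp.single w c) = c • f w := by
  rw [wordLift, Finsupp.lsum_single, LinearMap.toSpanSingleton_apply]

lemma Sa_single (d : ℕ) (w : Word d) :
    Sa d (Finsupp.single w 1) = Finsupp.single w.reverse ((-1 : ℝ) ^ w.length) := by
  rw [Sa, wordLift_single, one_smul]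

lemma J_single (d : ℕ) (w : Word d) :
    (idE d - nuE d) (Finsupp.single w 1) =
      if w = [] then 0 else Finsupp.single w 1 := by
  rw [LinearMap.sub_apply, idE, LinearMap.id_apply, nuE, wordLift_single, one_smul]
  by_cases h : w = []
  · subst h; simp
  · rw [if_neg h, if_neg h, sub_zero]

lemma EE_apply (d : ℕ) (t : ℝ) (x : KA d) :
    EE d t x = Finsupp.single ([] : Word d) (EbarL d t x) := by
  rw [EE, wordLift, Finsupp.lsum_apply, EbarL, Finsupp.sum, Finsupp.sum,
    Finsupp.single_finset_sum]
  refine Finset.sum_congr rfl fun w _ => ?_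
  rw [LinearMap.toSpanSingleton_apply, Finsupp.smul_single, smul_eq_mul]

lemma sh_zero_left (d : ℕ) (y : KA d) : sh d 0 y = 0 := by
  rw [sh_eq_shL]; simp

lemma sh_zero_right (d : ℕ) (x : KA d) : sh d x 0 = 0 := by
  rw [sh_eq_shL]; simp

lemma sh_single_left (d : ℕ) (u : Word d) (x : KA d) :
    sh d (Finsupp.single u 1) x = x.sum fun v cv => cv • shuffleWord d u v := by
  rw [sh, Finsupp.sum_single_index]
  · simp only [one_mul]
  · simp [Finsupp.sum]

noncomputable def itSh (d : ℕ) : Word d → KA d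
  | [] => Finsupp.single [] 1
  | a :: w => sh d (Finsupp.single [a] 1) (itSh d w)

lemma convPow_J (d : ℕ) : ∀ (n : ℕ) (w : Word d),
    (w.length < n → convPow d (idE d - nuE d) n (Finsupp.single w 1) = 0) ∧
    (w.length = n → convPow d (idE d - nuE d) n (Finsupp.single w 1) = itSh d w) := by
  intro n
  induction n with
  | zero =>
    intro w
    refine ⟨fun h => absurd h (Nat.not_lt_zero _), fun h => ?_⟩
    have : w = [] := List.length_eq_zero_iff.mp h
    subst this
    show nuE d (Finsupp.single [] 1) = itSh d []
    rw [nuE, wordLift_single, one_smul, if_pos rfl, itSh]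
  | succ k ih =>
    intro w
    have key : convPow d (idE d - nuE d) (k+1) (Finsupp.single w 1) =
        ∑ j ∈ Finset.range (w.length + 1),
          sh d ((idE d - nuE d) (Finsupp.single (w.take j) 1))
               (convPow d (idE d - nuE d) k (Finsupp.single (w.drop j) 1)) := by
      show conv d _ _ _ = _
      rw [conv, wordLift_single, one_smul]
    constructor
    · intro hlt
      rw [key]
      apply Finset.sum_eq_zero
      intro j hj
      by_cases hj0 : j = 0
      · subst hj0
        rw [List.take_zero, J_single, if_pos rfl, sh_zero_left]
      · have hdl : (w.drop j).length < k := by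
          simp only [Finset.mem_range] at hj
          rw [List.length_drop]; omega
        rw [(ih (w.drop j)).1 hdl, sh_zero_right]
    · intro hlen
      obtain ⟨a, w', rfl⟩ : ∃ a w', w = a :: w' := by
        cases w with
        | nil => simp at hlen
        | cons a w' => exact ⟨a, w', rfl⟩
      have hw' : w'.length = k := by simpa using hlen
      rw [key, Finset.sum_eq_single 1]
      · rw [show (a :: w').take 1 = [a] from rfl, show (a :: w').drop 1 = w' from rfl,
          J_single, if_neg (by simp), (ih w').2 hw']
        rfl
      · intro j hj hne
        by_cases hj0 : j = 0
        · subst hj0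
          rw [List.take_zero, J_single, if_pos rfl, sh_zero_left]
        · have hdl : ((a :: w').drop j).length < k := by
            rw [List.length_drop]
            simp only [List.length_cons, hw']
            simp only [Finset.mem_range, List.length_cons, hw'] at hj
            omega
          rw [(ih ((a :: w').drop j)).1 hdl, sh_zero_right]
      · intro h1
        exfalso
        exact h1 (Finset.mem_range.mpr (by simp))

lemma mD_rev_sh_single (d : ℕ) (u : Word d) (x : KA d) :
    Finsupp.mapDomain List.reverse (sh d (Finsupp.single u 1) x) =
      sh d (Finsupp.single u.reverse 1) (Finsupp.mapDomain List.reverse x) := by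
  rw [sh_single_left, sh_single_left,
    Finsupp.sum_mapDomain_index (by simp) (fun v c₁ c₂ => add_smul c₁ c₂ _),
    Finsupp.sum, Finsupp.sum, ← Finsupp.mapDomain.addMonoidHom_apply, map_sum]
  refine Finset.sum_congr rfl fun v _ => ?_
  rw [Finsupp.mapDomain.addMonoidHom_apply, Finsupp.mapDomain_smul, shW_rev]

lemma itSh_rev (d : ℕ) (w : Word d) :
    Finsupp.mapDomain List.reverse (itSh d w) = itSh d w := by
  induction w with
  | nil => rw [itSh]; rw [Finsupp.mapDomain_single]; rfl
  | cons a w ih =>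
    rw [itSh, mD_rev_sh_single, ih]
    rfl

lemma itSh_len (d : ℕ) (w : Word d) :
    ∀ w' ∈ (itSh d w).support, w'.length = w.length := by
  induction w with
  | nil =>
    intro w' hw'
    rw [itSh] at hw'
    have := Finsupp.support_single_subset hw'
    simp at this
    simp [this]
  | cons a w ih =>
    intro w' hw'
    rw [itSh, sh_single_left] at hw'
    have h2 := Finsupp.support_sum hw'
    rcases Finset.mem_biUnion.mp h2 with ⟨v, hv, hmem⟩
    have hmem2 : w' ∈ (shuffleWord d [a] v).support :=
      Finsupp.support_smul hmem
    have := shW_len d [a] v w' hmem2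
    simp only [List.length_cons, List.length_singleton, List.length_nil] at this ⊢
    rw [this, ih v hv]
    omega


lemma EbarL_sub (d : ℕ) (t : ℝ) (x y : KA d) :
    EbarL d t (x - y) = EbarL d t x - EbarL d t y := by
  rw [EbarL_eq, EbarL_eq, EbarL_eq, map_sub]

lemma EbarL_smul (d : ℕ) (t : ℝ) (c : ℝ) (x : KA d) :
    EbarL d t (c • x) = c * EbarL d t x := by
  rw [EbarL_eq, EbarL_eq, map_smul, smul_eq_mul]

lemma sh_comm (d : ℕ) (x y : KA d) : sh d x y = sh d y x := by
  rw [sh, sh, Finsupp.sum_comm]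
  refine Finsupp.sum_congr fun v _ => Finsupp.sum_congr fun u _ => ?_
  rw [mul_comm, shW_comm]

lemma EbarL_sh_single_rev (d : ℕ) (t : ℝ) (u : Word d) (x : KA d)
    (hx : Finsupp.mapDomain List.reverse x = x) :
    EbarL d t (sh d (Finsupp.single u.reverse 1) x) =
      EbarL d t (sh d (Finsupp.single u 1) x) := by
  conv_rhs => rw [← EbarL_mD_rev, mD_rev_sh_single, hx]

lemma Qeps_apply_eps (d m : ℕ) (t ε : ℝ) (x : KA d) :
    ((idE d - EE d t) ∘ₗ Qeps d m ε) x =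
      ((idE d - EE d t) ∘ₗ Qeps d m 0) x +
        ε • ((idE d - EE d t) ∘ₗ convPow d (idE d - nuE d) m) x := by
  have h : Qeps d m ε x = Qeps d m 0 x + ε • (convPow d (idE d - nuE d) m) x := by
    simp [Qeps]
  simp only [LinearMap.comp_apply, h, map_add, map_smul]

lemma X0_val (d m : ℕ) (t : ℝ) (hme : Even m) (u : Word d) (hu : u.length = m) :
    ((idE d - EE d t) ∘ₗ Qeps d m 0) (Finsupp.single u 1) =
      (1/2 : ℝ) • (Finsupp.single u 1 - Finsupp.single u.reverse 1) := by
  have hQ : Qeps d m 0 (Finsupp.single u 1) =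
      (1/2 : ℝ) • (Finsupp.single u 1 - Finsupp.single u.reverse 1) := by
    rw [Qeps]
    simp only [LinearMap.add_apply, LinearMap.smul_apply, zero_smul, add_zero,
      LinearMap.sub_apply, idE, LinearMap.id_apply]
    rw [Sa_single, hu, Even.neg_one_pow hme]
  have hE : EbarL d t
      ((1/2 : ℝ) • (Finsupp.single u 1 - Finsupp.single u.reverse 1)) = 0 := by
    rw [EbarL_smul, EbarL_sub, EbarL_single, EbarL_single, Ebar_rev]
    ring
  rw [LinearMap.comp_apply, hQ, LinearMap.sub_apply, idE, LinearMap.id_apply,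
    EE_apply, hE, Finsupp.single_zero, sub_zero]

lemma Z_val (d m : ℕ) (t : ℝ) (v : Word d) (hv : v.length = m) :
    ((idE d - EE d t) ∘ₗ convPow d (idE d - nuE d) m) (Finsupp.single v 1) =
      itSh d v - Finsupp.single ([] : Word d) (EbarL d t (itSh d v)) := by
  rw [LinearMap.comp_apply, (convPow_J d m v).2 hv, LinearMap.sub_apply, idE,
    LinearMap.id_apply, EE_apply]

lemma Zv_rev (d : ℕ) (t : ℝ) (v : Word d) :
    Finsupp.mapDomain List.reverse
      (itSh d v - Finsupp.single ([] : Word d) (EbarL d t (itSh d v))) =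
      itSh d v - Finsupp.single ([] : Word d) (EbarL d t (itSh d v)) := by
  rw [← Finsupp.mapDomain.addMonoidHom_apply, map_sub,
    Finsupp.mapDomain.addMonoidHom_apply, Finsupp.mapDomain.addMonoidHom_apply,
    itSh_rev, Finsupp.mapDomain_single, List.reverse_nil]

lemma cross_core (d : ℕ) (t : ℝ) (u : Word d) (z : KA d)
    (hz : Finsupp.mapDomain List.reverse z = z) :
    EbarL d t (sh d ((1/2 : ℝ) • (Finsupp.single u 1 - Finsupp.single u.reverse 1)) z)
      = 0 := by
  rw [sh_eq_shL, map_smul, map_sub, LinearMap.smul_apply, LinearMap.sub_apply,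
    EbarL_smul, EbarL_sub, ← sh_eq_shL, ← sh_eq_shL,
    EbarL_sh_single_rev d t u z hz]
  ring

lemma cross_zero (d m : ℕ) (t : ℝ) (hme : Even m) (u v : Word d)
    (hu : u.length = m) (hv : v.length = m) :
    EbarL d t (sh d (((idE d - EE d t) ∘ₗ Qeps d m 0) (Finsupp.single u 1))
      (((idE d - EE d t) ∘ₗ convPow d (idE d - nuE d) m) (Finsupp.single v 1)))
      = 0 := by
  rw [X0_val d m t hme u hu, Z_val d m t v hv]
  exact cross_core d t u _ (Zv_rev d t v)

lemma repr_len (d m : ℕ) (p : KA d) (hp : ∀ w ∈ p.support, w.length = m) :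
    p = ∑ x : Fin m → Fin (d+1),
      p (List.ofFn x) • Finsupp.single (List.ofFn x) 1 := by
  ext w
  rw [Finsupp.finset_sum_apply]
  by_cases hw : w.length = m
  · set x0 : Fin m → Fin (d+1) := fun i => w.get (Fin.cast hw.symm i) with hx0
    have hofn : List.ofFn x0 = w := by
      subst hw
      exact List.ofFn_get w
    rw [Finset.sum_eq_single x0]
    · rw [hofn]
      simp [Finsupp.single_apply]
    · intro y _ hy
      have : List.ofFn y ≠ w := by
        intro h
        exact hy (List.ofFn_injective (h.trans hofn.symm))
      simp [Finsupp.single_apply, this]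
    · intro h
      exact absurd (Finset.mem_univ x0) h
  · have hl : p w = 0 := by
      by_contra h
      exact hw (hp w (Finsupp.mem_support_iff.mpr h))
    rw [hl]
    symm
    apply Finset.sum_eq_zero
    intro y _
    have : List.ofFn y ≠ w := fun h => hw (by rw [← h, List.length_ofFn])
    simp [Finsupp.single_apply, this]

lemma inner_sum_sum {H : Type*} [NormedAddCommGroup H] [InnerProductSpace ℝ H]
    {κ : Type*} [Fintype κ] (W : κ → H) (a b : κ → ℝ) :
    (inner ℝ (∑ i, a i • W i) (∑ j, b j • W j) : ℝ) =
      ∑ i, ∑ j, a i * b j * (inner ℝ (W i) (W j) : ℝ) := by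
  simp only [sum_inner, inner_sum, real_inner_smul_left, real_inner_smul_right]
  rw [Finset.sum_comm]
  exact Finset.sum_congr rfl fun i _ => Finset.sum_congr rfl fun j _ => by
    rw [real_inner_comm]; ring


lemma sh_expand (d : ℕ) (t ε : ℝ) (a b c f : KA d) :
    EbarL d t (sh d (a + ε • b) (c + ε • f)) =
      EbarL d t (sh d a c) + ε * EbarL d t (sh d a f) + ε * EbarL d t (sh d b c)
        + (ε * ε) * EbarL d t (sh d b f) := by
  simp only [sh_eq_shL, EbarL_eq, map_add, map_smul, LinearMap.add_apply,
    LinearMap.smul_apply, smul_eq_mul]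
  ring

noncomputable def Acoef (d m : ℕ) (t : ℝ) (u : Fin m → Fin (d+1))
    (o : Option (Fin m → Fin (d+1))) : ℝ :=
  o.elim (-(EbarL d t (itSh d (List.ofFn u))))
    (fun x => (itSh d (List.ofFn u)) (List.ofFn x))

lemma zf_repr (d m : ℕ) (t : ℝ) (u : Fin m → Fin (d+1)) :
    itSh d (List.ofFn u) -
        Finsupp.single ([] : Word d) (EbarL d t (itSh d (List.ofFn u)))
      = ∑ o : Option (Fin m → Fin (d+1)),
          Acoef d m t u o • Finsupp.single (o.elim ([] : Word d) List.ofFn) 1 := by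
  rw [Fintype.sum_option]
  have h1 : Acoef d m t u none •
      (Finsupp.single ((none : Option (Fin m → Fin (d+1))).elim ([] : Word d) List.ofFn) (1:ℝ))
      = -Finsupp.single ([] : Word d) (EbarL d t (itSh d (List.ofFn u))) := by
    show (-(EbarL d t (itSh d (List.ofFn u)))) • (Finsupp.single ([] : Word d) (1:ℝ)) = _
    rw [Finsupp.smul_single, smul_eq_mul, mul_one, ← Finsupp.single_neg]
  have h3 : (∑ x : Fin m → Fin (d+1), Acoef d m t u (some x) •
        (Finsupp.single ((some x : Option (Fin m → Fin (d+1))).elim ([] : Word d) List.ofFn) (1:ℝ)))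
      = ∑ x : Fin m → Fin (d+1),
          (itSh d (List.ofFn u)) (List.ofFn x) • Finsupp.single (List.ofFn x) 1 :=
    Finset.sum_congr rfl fun x _ => rfl
  rw [h1, h3, ← repr_len d m (itSh d (List.ofFn u)) (fun w hw => by
    rw [itSh_len d (List.ofFn u) w hw, List.length_ofFn])]
  abel

lemma EbarL_sh_zz (d m : ℕ) (t : ℝ) (u v : Fin m → Fin (d+1)) :
    EbarL d t (sh d
      (itSh d (List.ofFn u) - Finsupp.single ([] : Word d) (EbarL d t (itSh d (List.ofFn u))))
      (itSh d (List.ofFn v) - Finsupp.single ([] : Word d) (EbarL d t (itSh d (List.ofFn v)))))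
    = ∑ o : Option (Fin m → Fin (d+1)), ∑ p : Option (Fin m → Fin (d+1)),
        Acoef d m t u o * Acoef d m t v p *
          EbarL d t (shuffleWord d (o.elim ([] : Word d) List.ofFn)
                                   (p.elim ([] : Word d) List.ofFn)) := by
  rw [zf_repr d m t u, zf_repr d m t v, sh_eq_shL, EbarL_eq]
  simp only [map_sum, map_smul, LinearMap.coe_sum, Finset.sum_apply,
    LinearMap.smul_apply, shL_single_single, smul_eq_mul]
  simp only [Finset.mul_sum]
  rw [Finset.sum_comm]
  refine Finset.sum_congr rfl fun o _ => Finset.sum_congr rfl fun p _ => ?_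
  rw [← EbarL_eq]
  ring

lemma sum_swap4 {α β : Type*} [Fintype α] [Fintype β] (F : α → α → β → β → ℝ) :
    ∑ u : α, ∑ v : α, ∑ o : β, ∑ p : β, F u v o p
      = ∑ o : β, ∑ p : β, ∑ u : α, ∑ v : α, F u v o p := by
  calc ∑ u : α, ∑ v : α, ∑ o : β, ∑ p : β, F u v o p
      = ∑ u : α, ∑ o : β, ∑ v : α, ∑ p : β, F u v o p :=
        Finset.sum_congr rfl fun u _ => Finset.sum_comm
    _ = ∑ o : β, ∑ u : α, ∑ v : α, ∑ p : β, F u v o p := Finset.sum_comm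
    _ = ∑ o : β, ∑ u : α, ∑ p : β, ∑ v : α, F u v o p :=
        Finset.sum_congr rfl fun o _ => Finset.sum_congr rfl fun u _ => Finset.sum_comm
    _ = ∑ o : β, ∑ p : β, ∑ u : α, ∑ v : α, F u v o p :=
        Finset.sum_congr rfl fun o _ => Finset.sum_comm

lemma sum_swap3 {α β : Type*} [Fintype α] [Fintype β] (F : α → α → β → ℝ) :
    ∑ o : α, ∑ p : α, ∑ r : β, F o p r = ∑ r : β, ∑ o : α, ∑ p : α, F o p r := by
  calc ∑ o : α, ∑ p : α, ∑ r : β, F o p r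
      = ∑ o : α, ∑ r : β, ∑ p : α, F o p r :=
        Finset.sum_congr rfl fun o _ => Finset.sum_comm
    _ = ∑ r : β, ∑ o : α, ∑ p : α, F o p r := Finset.sum_comm

lemma D_nonneg (d m : ℕ) (t : ℝ) (hPSD : gramPSD d m t)
    {H : Type*} [NormedAddCommGroup H] [InnerProductSpace ℝ H] (Vf : Word d → H) :
    0 ≤ ∑ u : Fin m → Fin (d+1), ∑ v : Fin m → Fin (d+1),
      EbarL d t (sh d
        (itSh d (List.ofFn u) - Finsupp.single ([] : Word d) (EbarL d t (itSh d (List.ofFn u))))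
        (itSh d (List.ofFn v) - Finsupp.single ([] : Word d) (EbarL d t (itSh d (List.ofFn v)))))
        * (inner ℝ (Vf (List.ofFn u)) (Vf (List.ofFn v)) : ℝ) := by
  classical
  set G : Option (Fin m → Fin (d+1)) → Option (Fin m → Fin (d+1)) → ℝ :=
    fun o p => EbarL d t (shuffleWord d (o.elim ([] : Word d) List.ofFn)
                                        (p.elim ([] : Word d) List.ofFn)) with hG
  set W : Option (Fin m → Fin (d+1)) → H :=
    fun o => ∑ u : Fin m → Fin (d+1), Acoef d m t u o • Vf (List.ofFn u) with hW
  have step1 : (∑ u : Fin m → Fin (d+1), ∑ v : Fin m → Fin (d+1),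
      EbarL d t (sh d
        (itSh d (List.ofFn u) - Finsupp.single ([] : Word d) (EbarL d t (itSh d (List.ofFn u))))
        (itSh d (List.ofFn v) - Finsupp.single ([] : Word d) (EbarL d t (itSh d (List.ofFn v)))))
        * (inner ℝ (Vf (List.ofFn u)) (Vf (List.ofFn v)) : ℝ))
      = ∑ o : Option (Fin m → Fin (d+1)), ∑ p : Option (Fin m → Fin (d+1)),
          G o p * (inner ℝ (W o) (W p) : ℝ) := by
    have e1 : ∀ u v : Fin m → Fin (d+1),
        EbarL d t (sh d
          (itSh d (List.ofFn u) - Finsupp.single ([] : Word d) (EbarL d t (itSh d (List.ofFn u))))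
          (itSh d (List.ofFn v) - Finsupp.single ([] : Word d) (EbarL d t (itSh d (List.ofFn v)))))
          * (inner ℝ (Vf (List.ofFn u)) (Vf (List.ofFn v)) : ℝ)
        = ∑ o : Option (Fin m → Fin (d+1)), ∑ p : Option (Fin m → Fin (d+1)),
            Acoef d m t u o * Acoef d m t v p * G o p
              * (inner ℝ (Vf (List.ofFn u)) (Vf (List.ofFn v)) : ℝ) := by
      intro u v
      rw [EbarL_sh_zz d m t u v, Finset.sum_mul]
      exact Finset.sum_congr rfl fun o _ => by rw [Finset.sum_mul]
    calc (∑ u : Fin m → Fin (d+1), ∑ v : Fin m → Fin (d+1),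
        EbarL d t (sh d
          (itSh d (List.ofFn u) - Finsupp.single ([] : Word d) (EbarL d t (itSh d (List.ofFn u))))
          (itSh d (List.ofFn v) - Finsupp.single ([] : Word d) (EbarL d t (itSh d (List.ofFn v)))))
          * (inner ℝ (Vf (List.ofFn u)) (Vf (List.ofFn v)) : ℝ))
        = ∑ u : Fin m → Fin (d+1), ∑ v : Fin m → Fin (d+1),
            ∑ o : Option (Fin m → Fin (d+1)), ∑ p : Option (Fin m → Fin (d+1)),
              Acoef d m t u o * Acoef d m t v p * G o p
                * (inner ℝ (Vf (List.ofFn u)) (Vf (List.ofFn v)) : ℝ) :=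
          Finset.sum_congr rfl fun u _ => Finset.sum_congr rfl fun v _ => e1 u v
      _ = ∑ o : Option (Fin m → Fin (d+1)), ∑ p : Option (Fin m → Fin (d+1)),
            ∑ u : Fin m → Fin (d+1), ∑ v : Fin m → Fin (d+1),
              Acoef d m t u o * Acoef d m t v p * G o p
                * (inner ℝ (Vf (List.ofFn u)) (Vf (List.ofFn v)) : ℝ) := sum_swap4 _
      _ = ∑ o : Option (Fin m → Fin (d+1)), ∑ p : Option (Fin m → Fin (d+1)),
            G o p * (inner ℝ (W o) (W p) : ℝ) := by
          refine Finset.sum_congr rfl fun o _ => Finset.sum_congr rfl fun p _ => ?_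
          rw [hW, inner_sum_sum, Finset.mul_sum]
          refine Finset.sum_congr rfl fun u _ => ?_
          rw [Finset.mul_sum]
          exact Finset.sum_congr rfl fun v _ => by ring
  rw [step1]
  -- PSD argument
  set M : Matrix (Option (Fin m → Fin (d+1))) (Option (Fin m → Fin (d+1))) ℝ :=
    Matrix.of G with hM
  have hherm : M.IsHermitian := by
    ext o p
    show star (G p o) = G o p
    rw [star_trivial, hG]
    simp only
    rw [shW_comm]
  have hpsd : M.PosSemidef := by
    refine Matrix.PosSemidef.of_dotProduct_mulVec_nonneg hherm fun x => ?_
    have h := hPSD x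
    calc (0:ℝ) ≤ ∑ o : Option (Fin m → Fin (d+1)), ∑ p : Option (Fin m → Fin (d+1)),
          x o * x p * G o p := h
      _ = dotProduct (star x) (M.mulVec x) := by
          rw [dotProduct]
          refine Finset.sum_congr rfl fun o _ => ?_
          rw [Matrix.mulVec, dotProduct, Pi.star_apply, star_trivial,
            Finset.mul_sum]
          refine Finset.sum_congr rfl fun p _ => ?_
          have hMG : M o p = G o p := rfl
          rw [hMG]
          ring
  obtain ⟨B, hB⟩ : ∃ B : Matrix (Option (Fin m → Fin (d+1))) (Option (Fin m → Fin (d+1))) ℝ,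
      M = B.conjTranspose * B := by
    open scoped MatrixOrder in
    obtain ⟨B, hB⟩ := CStarAlgebra.nonneg_iff_eq_star_mul_self.mp hpsd.nonneg
    exact ⟨B, hB⟩
  have hMB : ∀ o p, G o p = ∑ r : Option (Fin m → Fin (d+1)), B r o * B r p := by
    intro o p
    have h2 : M o p = (B.conjTranspose * B) o p := by rw [← hB]
    rw [Matrix.mul_apply] at h2
    calc G o p = M o p := rfl
      _ = ∑ r, B.conjTranspose o r * B r p := h2
      _ = ∑ r, B r o * B r p :=
        Finset.sum_congr rfl fun r _ => by
          rw [Matrix.conjTranspose_apply, star_trivial]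
  calc (0:ℝ) ≤ ∑ r : Option (Fin m → Fin (d+1)),
        (inner ℝ (∑ o : Option (Fin m → Fin (d+1)), B r o • W o)
               (∑ p : Option (Fin m → Fin (d+1)), B r p • W p) : ℝ) :=
        Finset.sum_nonneg fun r _ => real_inner_self_nonneg
    _ = ∑ r : Option (Fin m → Fin (d+1)), ∑ o : Option (Fin m → Fin (d+1)),
          ∑ p : Option (Fin m → Fin (d+1)), B r o * B r p * (inner ℝ (W o) (W p) : ℝ) :=
        Finset.sum_congr rfl fun r _ => inner_sum_sum _ _ _
    _ = ∑ o : Option (Fin m → Fin (d+1)), ∑ p : Option (Fin m → Fin (d+1)),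
          ∑ r : Option (Fin m → Fin (d+1)), B r o * B r p * (inner ℝ (W o) (W p) : ℝ) :=
        (sum_swap3 _).symm
    _ = ∑ o : Option (Fin m → Fin (d+1)), ∑ p : Option (Fin m → Fin (d+1)),
          G o p * (inner ℝ (W o) (W p) : ℝ) := by
        refine Finset.sum_congr rfl fun o _ => Finset.sum_congr rfl fun p _ => ?_
        rw [hMB o p, Finset.sum_mul]

theorem stmt_6 (d m : ℕ) (hd : 1 ≤ d) (hm : 2 ≤ m) (hme : Even m)
    (t : ℝ) (ht : 0 < t) (hPSD : gramPSD d m t)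
    {H : Type*} [NormedAddCommGroup H] [InnerProductSpace ℝ H]
    (Vf : Word d → H) (ε : ℝ) :
    ip d t Vf m ((idE d - EE d t) ∘ₗ Qeps d m ε) ((idE d - EE d t) ∘ₗ Qeps d m ε)
      ≥ ip d t Vf m ((idE d - EE d t) ∘ₗ Qeps d m 0)
                    ((idE d - EE d t) ∘ₗ Qeps d m 0) := by
  have hpoint : ∀ u v : Fin m → Fin (d+1),
      EbarL d t (sh d
        (((idE d - EE d t) ∘ₗ Qeps d m ε) (Finsupp.single (List.ofFn u) 1))
        (((idE d - EE d t) ∘ₗ Qeps d m ε) (Finsupp.single (List.ofFn v) 1)))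
      = EbarL d t (sh d
          (((idE d - EE d t) ∘ₗ Qeps d m 0) (Finsupp.single (List.ofFn u) 1))
          (((idE d - EE d t) ∘ₗ Qeps d m 0) (Finsupp.single (List.ofFn v) 1)))
        + (ε * ε) * EbarL d t (sh d
            (itSh d (List.ofFn u) -
              Finsupp.single ([] : Word d) (EbarL d t (itSh d (List.ofFn u))))
            (itSh d (List.ofFn v) -
              Finsupp.single ([] : Word d) (EbarL d t (itSh d (List.ofFn v))))) := by
    intro u v
    rw [Qeps_apply_eps d m t ε (Finsupp.single (List.ofFn u) 1),
      Qeps_apply_eps d m t ε (Finsupp.single (List.ofFn v) 1), sh_expand]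
    have c1 : EbarL d t (sh d
        (((idE d - EE d t) ∘ₗ Qeps d m 0) (Finsupp.single (List.ofFn u) 1))
        (((idE d - EE d t) ∘ₗ convPow d (idE d - nuE d) m)
          (Finsupp.single (List.ofFn v) 1))) = 0 :=
      cross_zero d m t hme _ _ (List.length_ofFn (f := u)) (List.length_ofFn (f := v))
    have c2 : EbarL d t (sh d
        (((idE d - EE d t) ∘ₗ convPow d (idE d - nuE d) m)
          (Finsupp.single (List.ofFn u) 1))
        (((idE d - EE d t) ∘ₗ Qeps d m 0) (Finsupp.single (List.ofFn v) 1))) = 0 := by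
      rw [sh_comm]
      exact cross_zero d m t hme _ _ (List.length_ofFn (f := v)) (List.length_ofFn (f := u))
    rw [c1, c2, Z_val d m t _ (List.length_ofFn (f := u)), Z_val d m t _ (List.length_ofFn (f := v))]
    ring
  have hD := D_nonneg d m t hPSD Vf
  have hip : ip d t Vf m ((idE d - EE d t) ∘ₗ Qeps d m ε) ((idE d - EE d t) ∘ₗ Qeps d m ε)
      = ip d t Vf m ((idE d - EE d t) ∘ₗ Qeps d m 0) ((idE d - EE d t) ∘ₗ Qeps d m 0)
        + (ε * ε) * ∑ u : Fin m → Fin (d+1), ∑ v : Fin m → Fin (d+1),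
            EbarL d t (sh d
              (itSh d (List.ofFn u) -
                Finsupp.single ([] : Word d) (EbarL d t (itSh d (List.ofFn u))))
              (itSh d (List.ofFn v) -
                Finsupp.single ([] : Word d) (EbarL d t (itSh d (List.ofFn v)))))
              * (inner ℝ (Vf (List.ofFn u)) (Vf (List.ofFn v)) : ℝ) := by
    simp only [ip]
    rw [Finset.mul_sum, ← Finset.sum_add_distrib]
    refine Finset.sum_congr rfl fun u _ => ?_
    rw [Finset.mul_sum, ← Finset.sum_add_distrib]
    refine Finset.sum_congr rfl fun v _ => ?_
    rw [hpoint u v]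
    ring
  rw [hip]
  have h2 : 0 ≤ (ε * ε) * ∑ u : Fin m → Fin (d+1), ∑ v : Fin m → Fin (d+1),
      EbarL d t (sh d
        (itSh d (List.ofFn u) -
          Finsupp.single ([] : Word d) (EbarL d t (itSh d (List.ofFn u))))
        (itSh d (List.ofFn v) -
          Finsupp.single ([] : Word d) (EbarL d t (itSh d (List.ofFn v)))))
        * (inner ℝ (Vf (List.ofFn u)) (Vf (List.ofFn v)) : ℝ) :=
    mul_nonneg (mul_self_nonneg ε) hD
  linarith
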